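/- Let k be a field of characteristic p > 0. In k((t)), for any f ∈ k((t)) the residue of f^{p−1} df is zero; equivalently Res(f^{p−1} f' dt) = 0. -/

import Mathlib

open Finset HahnSeries

namespace ResidueAux

variable {R : Type*} [CommRing R]

lemma deriv_coeff (f : LaurentSeries R) (n : ℤ) :
    (LaurentSeries.derivative R f).coeff n = (n + 1) • f.coeff (n + 1) := by
  rw [LaurentSeries.derivative_apply, LaurentSeries.hasseDeriv_coeff]
  norm_num [Ring.choose_one_right]

lemma deriv_res (f : LaurentSeries R) : (LaurentSeries.derivative R f).coeff (-1) = 0 := by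
  rw [deriv_coeff]; norm_num

lemma deriv_mul_coeff (f g : LaurentSeries R) (n : ℤ) :
    (LaurentSeries.derivative R f * g).coeff n =
      ∑ ij ∈ addAntidiagonal f.isPWO_support g.isPWO_support (n + 1),
        ij.1 • (f.coeff ij.1 * g.coeff ij.2) := by
  have hs : ((· - (1:ℤ)) '' f.support).IsPWO :=
    f.isPWO_support.image_of_monotone (fun a b h => by simpa using h)
  have hsub : (LaurentSeries.derivative R f).support ⊆ (· - (1:ℤ)) '' f.support := by
    intro i hi
    have h1 : f.coeff (i + 1) ≠ 0 := by
      intro h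
      apply hi
      rw [deriv_coeff, h, smul_zero]
    exact ⟨i + 1, h1, by ring⟩
  rw [HahnSeries.coeff_mul_left' hs hsub]
  refine Finset.sum_nbij' (fun ij => (ij.1 + 1, ij.2)) (fun ij => (ij.1 - 1, ij.2))
    ?_ ?_ ?_ ?_ ?_
  · rintro ⟨i, j⟩ hij
    simp only [Finset.mem_addAntidiagonal, Set.mem_image] at hij ⊢
    obtain ⟨⟨a, ha, hae⟩, hj, hn⟩ := hij
    exact Finset.mem_addAntidiagonal.mpr ⟨by rw [show i + 1 = a by omega]; exact ha, hj, by omega⟩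
  · rintro ⟨i, j⟩ hij
    simp only [Finset.mem_addAntidiagonal, Set.mem_image] at hij ⊢
    obtain ⟨hi, hj, hn⟩ := Finset.mem_addAntidiagonal.mp hij
    exact ⟨⟨i, hi, rfl⟩, hj, by omega⟩
  · rintro ⟨i, j⟩ _; simp
  · rintro ⟨i, j⟩ _; simp
  · rintro ⟨i, j⟩ _
    simp only [deriv_coeff, smul_mul_assoc]

lemma deriv_mul_coeff' (f g : LaurentSeries R) (n : ℤ) :
    (f * LaurentSeries.derivative R g).coeff n =
      ∑ ij ∈ addAntidiagonal f.isPWO_support g.isPWO_support (n + 1),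
        ij.2 • (f.coeff ij.1 * g.coeff ij.2) := by
  have hs : ((· - (1:ℤ)) '' g.support).IsPWO :=
    g.isPWO_support.image_of_monotone (fun a b h => by simpa using h)
  have hsub : (LaurentSeries.derivative R g).support ⊆ (· - (1:ℤ)) '' g.support := by
    intro i hi
    have h1 : g.coeff (i + 1) ≠ 0 := by
      intro h
      apply hi
      rw [deriv_coeff, h, smul_zero]
    exact ⟨i + 1, h1, by ring⟩
  rw [HahnSeries.coeff_mul_right' hs hsub]
  refine Finset.sum_nbij' (fun ij => (ij.1, ij.2 + 1)) (fun ij => (ij.1, ij.2 - 1))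
    ?_ ?_ ?_ ?_ ?_
  · rintro ⟨i, j⟩ hij
    simp only [Finset.mem_addAntidiagonal, Set.mem_image] at hij ⊢
    obtain ⟨hi, ⟨a, ha, hae⟩, hn⟩ := hij
    exact Finset.mem_addAntidiagonal.mpr ⟨hi, by rw [show j + 1 = a by omega]; exact ha, by omega⟩
  · rintro ⟨i, j⟩ hij
    simp only [Finset.mem_addAntidiagonal, Set.mem_image] at hij ⊢
    obtain ⟨hi, hj, hn⟩ := Finset.mem_addAntidiagonal.mp hij
    exact ⟨hi, ⟨j, hj, rfl⟩, by omega⟩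
  · rintro ⟨i, j⟩ _; simp
  · rintro ⟨i, j⟩ _; simp
  · rintro ⟨i, j⟩ _
    simp only [deriv_coeff, mul_smul_comm]

lemma deriv_mul (f g : LaurentSeries R) :
    LaurentSeries.derivative R (f * g) =
      LaurentSeries.derivative R f * g + f * LaurentSeries.derivative R g := by
  ext n
  rw [HahnSeries.coeff_add, deriv_coeff, deriv_mul_coeff, deriv_mul_coeff',
    HahnSeries.coeff_mul, Finset.smul_sum, ← Finset.sum_add_distrib]
  refine Finset.sum_congr rfl ?_
  rintro ⟨i, j⟩ hij
  obtain ⟨-, -, hn⟩ := Finset.mem_addAntidiagonal.mp hij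
  simp only
  rw [← add_smul]
  rw [show (i : ℤ) + j = n + 1 from hn]

lemma deriv_pow (f : LaurentSeries R) (m : ℕ) :
    LaurentSeries.derivative R (f ^ (m + 1)) =
      (m + 1) • (f ^ m * LaurentSeries.derivative R f) := by
  induction m with
  | zero => simp
  | succ m ih =>
    rw [pow_succ, deriv_mul, ih, smul_mul_assoc]
    have h : f ^ m * LaurentSeries.derivative R f * f =
        f ^ (m + 1) * LaurentSeries.derivative R f := by ring
    rw [h]
    conv_rhs => rw [succ_nsmul]

lemma generic_res {S : Type*} [CommRing S] [IsDomain S] [CharZero S]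
    (m : ℕ) (F : LaurentSeries S) :
    (F ^ m * LaurentSeries.derivative S F).coeff (-1) = 0 := by
  have h := congrArg (fun x : LaurentSeries S => x.coeff (-1)) (deriv_pow F m)
  simp only [deriv_res] at h
  rw [HahnSeries.coeff_nsmul] at h
  simp only [Pi.smul_apply, nsmul_eq_mul] at h
  have hm : ((m : S) + 1) ≠ 0 := by
    exact_mod_cast (Nat.cast_ne_zero (R := S)).mpr (Nat.succ_ne_zero m)
  have := mul_eq_zero.mp h.symm
  rcases this with h' | h'
  · exact absurd h' (by exact_mod_cast hm)
  · exact h'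

lemma hmap_mul {S : Type*} [CommRing S] (φ : R →+* S) (x y : LaurentSeries R) :
    (x * y).map φ = x.map φ * y.map φ :=
  HahnSeries.map_mul (φ : R →ₙ+* S)

lemma map_deriv {S : Type*} [CommRing S] (φ : R →+* S) (f : LaurentSeries R) :
    (LaurentSeries.derivative R f).map φ = LaurentSeries.derivative S (f.map φ) := by
  ext n
  rw [HahnSeries.map_coeff, deriv_coeff, deriv_coeff, HahnSeries.map_coeff, map_zsmul]

lemma map_pow' {S : Type*} [CommRing S] (φ : R →+* S) (f : LaurentSeries R) (m : ℕ) :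
    (f ^ m).map φ = (f.map φ) ^ m := by
  induction m with
  | zero =>
    ext n
    simp only [HahnSeries.map_coeff] at *
    exact congrArg (fun x : HahnSeries ℤ S => x.coeff n)
      (HahnSeries.map_one (Γ := ℤ) (φ.toMonoidWithZeroHom))
  | succ m ih =>
    rw [pow_succ, pow_succ, ← ih]
    exact HahnSeries.map_mul (φ : R →ₙ+* S)

end ResidueAux

theorem residue_pow_pred_mul_derivative_eq_zero
    (k : Type*) [Field k] (p : ℕ) [Fact p.Prime] [CharP k p] (f : LaurentSeries k) :
    (f ^ (p - 1) * LaurentSeries.derivative k f).coeff (-1) = 0 := by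
  classical
  set R := MvPolynomial ℤ ℤ with hR
  -- generic lift of f
  let F : LaurentSeries R :=
    ⟨fun n => if f.coeff n = 0 then 0 else MvPolynomial.X n,
     f.isPWO_support.mono (by
      intro n hn
      simp only [Function.mem_support, ne_eq, ite_eq_left_iff, not_forall] at hn
      exact hn.1)⟩
  let φ : R →+* k := MvPolynomial.eval₂Hom (Int.castRingHom k) (fun n => f.coeff n)
  have hmap : F.map φ = f := by
    ext n
    rw [HahnSeries.map_coeff]
    by_cases h : f.coeff n = 0
    · simp [F, h]
    · show φ (if f.coeff n = 0 then 0 else MvPolynomial.X n) = f.coeff n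
      rw [if_neg h]
      exact MvPolynomial.eval₂Hom_X' _ _ _
  have hgen : (F ^ (p - 1) * LaurentSeries.derivative R F).coeff (-1) = 0 :=
    ResidueAux.generic_res (p - 1) F
  have := congrArg φ hgen
  rw [map_zero] at this
  calc (f ^ (p - 1) * LaurentSeries.derivative k f).coeff (-1)
      = ((F ^ (p - 1) * LaurentSeries.derivative R F).map φ).coeff (-1) := by
        rw [ResidueAux.hmap_mul φ, ResidueAux.map_pow', ResidueAux.map_deriv, hmap]
    _ = φ ((F ^ (p - 1) * LaurentSeries.derivative R F).coeff (-1)) := by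
        rw [HahnSeries.map_coeff]
    _ = 0 := this
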